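/- Composition of winning MSO-EF strategies on disjoint unions: let τ be a finite relational signature with unary and binary symbols. If the duplicator has winning strategies in the m-round MSO Ehrenfeucht–Fraïssé game (allowing both point moves and set moves) between A₁ and A₂ and between B₁ and B₂, then the duplicator has a winning strategy in the m-round MSO-EF game between A₁ ⊔ B₁ and A₂ ⊔ B₂, obtained by splitting each set move Z into Z ∩ A-part and Z ∩ B-part and answering componentwise; in particular A₁ ⊔ B₁ and A₂ ⊔ B₂ satisfy the same MSO sentences of quantifier rank ≤ m. -/

import Mathlib

open FirstOrder Language

/-- MSO formulas over a relational signature `L`, with `n` free first-order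
variables and `k` free set variables. -/
inductive MSOForm (L : FirstOrder.Language) : ℕ → ℕ → Type _
  | fal {n k : ℕ} : MSOForm L n k
  | eq {n k : ℕ} (i j : Fin n) : MSOForm L n k
  | rel {n k r : ℕ} (R : L.Relations r) (v : Fin r → Fin n) : MSOForm L n k
  | mem {n k : ℕ} (i : Fin n) (X : Fin k) : MSOForm L n k
  | imp {n k : ℕ} (f g : MSOForm L n k) : MSOForm L n k
  | allP {n k : ℕ} (f : MSOForm L (n + 1) k) : MSOForm L n k
  | allS {n k : ℕ} (f : MSOForm L n (k + 1)) : MSOForm L n k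

/-- Satisfaction of MSO formulas. -/
def MSORealize {L : FirstOrder.Language} {M : Type} (SM : L.Structure M) :
    ∀ {n k : ℕ}, MSOForm L n k → (Fin n → M) → (Fin k → Set M) → Prop
  | _, _, .fal, _, _ => False
  | _, _, .eq i j, p, _ => p i = p j
  | _, _, .rel R v, p, _ => SM.RelMap R (p ∘ v)
  | _, _, .mem i X, p, s => p i ∈ s X
  | _, _, .imp f g, p, s => MSORealize SM f p s → MSORealize SM g p s
  | _, _, .allP f, p, s => ∀ x : M, MSORealize SM f (Fin.snoc p x) s
  | _, _, .allS f, p, s => ∀ X : Set M, MSORealize SM f p (Fin.snoc s X)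

/-- Quantifier rank of an MSO formula (counting both kinds of quantifiers). -/
def msoQR {L : FirstOrder.Language} : ∀ {n k : ℕ}, MSOForm L n k → ℕ
  | _, _, .fal => 0
  | _, _, .eq _ _ => 0
  | _, _, .rel _ _ => 0
  | _, _, .mem _ _ => 0
  | _, _, .imp f g => max (msoQR f) (msoQR g)
  | _, _, .allP f => msoQR f + 1
  | _, _, .allS f => msoQR f + 1

/-- A move in the MSO-EF game on `M`: a point move or a set move. -/
def MSOMove (M : Type) : Type := M ⊕ Set M

/-- A duplicator strategy in the MSO-EF game between `M` and `N`. -/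
def MSOStrat (M N : Type) : Type :=
  List (MSOMove M × MSOMove N) → (MSOMove M ⊕ MSOMove N) → MSOMove M × MSOMove N

/-- A strategy is proper if it keeps the spoiler's move on its own side. -/
def msoProper {M N : Type} (S : MSOStrat M N) : Prop :=
  ∀ h x, (∀ a, x = Sum.inl a → (S h x).1 = a) ∧ (∀ b, x = Sum.inr b → (S h x).2 = b)

/-- The history after `k` rounds of the duplicator strategy `S` against the
adaptive spoiler `σ`. -/
def msoPlay {M N : Type} (S : MSOStrat M N)
    (σ : List (MSOMove M × MSOMove N) → MSOMove M ⊕ MSOMove N) :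
    ℕ → List (MSOMove M × MSOMove N)
  | 0 => []
  | k + 1 => msoPlay S σ k ++ [S (msoPlay S σ k) (σ (msoPlay S σ k))]

/-- The point pairs of a history. -/
def ptsOf {M N : Type} (h : List (MSOMove M × MSOMove N)) : List (M × N) :=
  h.filterMap fun p =>
    match p with
    | (Sum.inl a, Sum.inl b) => some (a, b)
    | _ => none

/-- The set pairs of a history. -/
def setsOf {M N : Type} (h : List (MSOMove M × MSOMove N)) : List (Set M × Set N) :=
  h.filterMap fun p =>
    match p with
    | (Sum.inr X, Sum.inr Y) => some (X, Y)
    | _ => none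

/-- The duplicator wins on a history if point moves were answered by points,
set moves by sets, and the chosen points form a partial isomorphism between
the structures expanded by the chosen sets as unary predicates. -/
def msoWinOn (L : FirstOrder.Language) {M N : Type}
    (SM : L.Structure M) (SN : L.Structure N)
    (h : List (MSOMove M × MSOMove N)) : Prop :=
  (∀ p ∈ h, (∃ a b, p = (Sum.inl a, Sum.inl b)) ∨ (∃ X Y, p = (Sum.inr X, Sum.inr Y))) ∧
  (∀ p ∈ ptsOf h, ∀ q ∈ ptsOf h, (p.1 = q.1 ↔ p.2 = q.2)) ∧
  (∀ (n : ℕ) (R : L.Relations n) (f : Fin n → M × N), (∀ i, f i ∈ ptsOf h) →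
    (SM.RelMap R (fun i => (f i).1) ↔ SN.RelMap R (fun i => (f i).2))) ∧
  (∀ p ∈ ptsOf h, ∀ s ∈ setsOf h, (p.1 ∈ s.1 ↔ p.2 ∈ s.2))

/-- A winning strategy for the `m`-round MSO-EF game. -/
def msoWinning (L : FirstOrder.Language) {M N : Type}
    (SM : L.Structure M) (SN : L.Structure N) (m : ℕ) (S : MSOStrat M N) : Prop :=
  ∀ σ, msoWinOn L SM SN (msoPlay S σ m)

/-- The disjoint union of two structures over a relational signature. -/
def sumStructure (L : FirstOrder.Language) (hfun : ∀ n, IsEmpty (L.Functions n))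
    {M N : Type} (SM : L.Structure M) (SN : L.Structure N) :
    L.Structure (M ⊕ N) where
  funMap := fun {n} f => ((hfun n).false f).elim
  RelMap := fun {n} R x =>
    (∃ f : Fin n → M, x = Sum.inl ∘ f ∧ SM.RelMap R f) ∨
    (∃ g : Fin n → N, x = Sum.inr ∘ g ∧ SN.RelMap R g)

/-- The set underlying a move (a point move gives a singleton; only used on
set moves). -/
def moveSet {X : Type} : MSOMove X → Set X
  | Sum.inl a => {a}
  | Sum.inr s => s

/-- Transport of a move along an injection. -/
def mapMove {X Y : Type} (f : X → Y) : MSOMove X → MSOMove Y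
  | Sum.inl a => Sum.inl (f a)
  | Sum.inr s => Sum.inr (f '' s)

/-- The `A`-part of a history of the MSO-EF game on the disjoint unions:
point pairs in the `A`-parts are kept, set pairs are intersected with the
`A`-parts. -/
def msoProjA {A₁ B₁ A₂ B₂ : Type}
    (h : List (MSOMove (A₁ ⊕ B₁) × MSOMove (A₂ ⊕ B₂))) :
    List (MSOMove A₁ × MSOMove A₂) :=
  h.filterMap fun p =>
    match p with
    | (Sum.inl (Sum.inl a), Sum.inl (Sum.inl a')) => some (Sum.inl a, Sum.inl a')
    | (Sum.inr Z, Sum.inr Z') => some (Sum.inr (Sum.inl ⁻¹' Z), Sum.inr (Sum.inl ⁻¹' Z'))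
    | _ => none

/-- The `B`-part of a history of the MSO-EF game on the disjoint unions. -/
def msoProjB {A₁ B₁ A₂ B₂ : Type}
    (h : List (MSOMove (A₁ ⊕ B₁) × MSOMove (A₂ ⊕ B₂))) :
    List (MSOMove B₁ × MSOMove B₂) :=
  h.filterMap fun p =>
    match p with
    | (Sum.inl (Sum.inr b), Sum.inl (Sum.inr b')) => some (Sum.inl b, Sum.inl b')
    | (Sum.inr Z, Sum.inr Z') => some (Sum.inr (Sum.inr ⁻¹' Z), Sum.inr (Sum.inr ⁻¹' Z'))
    | _ => none

/-- The composed strategy on the disjoint unions: answer point moves in the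
`A`-part by `S₁` and in the `B`-part by `S₂`; split each set move `Z` into its
`A`-part and `B`-part, answer componentwise by `S₁` and `S₂`, and return the
union of the two answers. -/
def msoComp {A₁ B₁ A₂ B₂ : Type} (S₁ : MSOStrat A₁ A₂) (S₂ : MSOStrat B₁ B₂) :
    MSOStrat (A₁ ⊕ B₁) (A₂ ⊕ B₂) :=
  fun h pick =>
    match pick with
    | Sum.inl (Sum.inl (Sum.inl a)) =>
        let r := S₁ (msoProjA h) (Sum.inl (Sum.inl a))
        (Sum.inl (Sum.inl a), mapMove Sum.inl r.2)
    | Sum.inl (Sum.inl (Sum.inr b)) =>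
        let r := S₂ (msoProjB h) (Sum.inl (Sum.inl b))
        (Sum.inl (Sum.inr b), mapMove Sum.inr r.2)
    | Sum.inl (Sum.inr Z) =>
        let rA := S₁ (msoProjA h) (Sum.inl (Sum.inr (Sum.inl ⁻¹' Z)))
        let rB := S₂ (msoProjB h) (Sum.inl (Sum.inr (Sum.inr ⁻¹' Z)))
        (Sum.inr Z, Sum.inr (Sum.inl '' moveSet rA.2 ∪ Sum.inr '' moveSet rB.2))
    | Sum.inr (Sum.inl (Sum.inl a')) =>
        let r := S₁ (msoProjA h) (Sum.inr (Sum.inl a'))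
        (mapMove Sum.inl r.1, Sum.inl (Sum.inl a'))
    | Sum.inr (Sum.inl (Sum.inr b')) =>
        let r := S₂ (msoProjB h) (Sum.inr (Sum.inl b'))
        (mapMove Sum.inr r.1, Sum.inl (Sum.inr b'))
    | Sum.inr (Sum.inr Z') =>
        let rA := S₁ (msoProjA h) (Sum.inr (Sum.inr (Sum.inl ⁻¹' Z')))
        let rB := S₂ (msoProjB h) (Sum.inr (Sum.inr (Sum.inr ⁻¹' Z')))
        (Sum.inr (Sum.inl '' moveSet rA.1 ∪ Sum.inr '' moveSet rB.1), Sum.inr Z')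


section Infra

variable {L : FirstOrder.Language} {M N : Type}

lemma msoPlay_length (S : MSOStrat M N) (σ) (k : ℕ) : (msoPlay S σ k).length = k := by
  induction k with
  | zero => rfl
  | succ k ih => simp [msoPlay, ih]

lemma msoPlay_mono (S : MSOStrat M N) (σ) {i j : ℕ} (hij : i ≤ j) :
    ∀ p ∈ msoPlay S σ i, p ∈ msoPlay S σ j := by
  induction j with
  | zero =>
    have : i = 0 := Nat.le_zero.mp hij
    subst this; exact fun p hp => hp
  | succ j ih =>
    rcases Nat.lt_or_ge i (j+1) with h | h
    · intro p hp
      simp only [msoPlay, List.mem_append]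
      exact Or.inl (ih (Nat.lt_succ_iff.mp h) p hp)
    · have : i = j + 1 := le_antisymm hij h
      subst this; exact fun p hp => hp

/-- A history is reachable for `S` if some spoiler produces it. -/
def Reach (S : MSOStrat M N) (h : List (MSOMove M × MSOMove N)) : Prop :=
  ∃ σ, msoPlay S σ h.length = h

lemma reach_nil (S : MSOStrat M N) : Reach S [] :=
  ⟨fun _ => Sum.inl (Sum.inr ∅), rfl⟩

lemma msoPlay_congr (S : MSOStrat M N) (σ σ') (j : ℕ)
    (hagree : ∀ i < j, σ' (msoPlay S σ i) = σ (msoPlay S σ i)) :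
    msoPlay S σ' j = msoPlay S σ j := by
  induction j with
  | zero => rfl
  | succ j ih =>
    have h1 : msoPlay S σ' j = msoPlay S σ j :=
      ih (fun i hi => hagree i (Nat.lt_succ_of_lt hi))
    simp [msoPlay, h1, hagree j (Nat.lt_succ_self j)]

lemma reach_extend {S : MSOStrat M N} {h} (hr : Reach S h) (x : MSOMove M ⊕ MSOMove N) :
    Reach S (h ++ [S h x]) := by
  obtain ⟨σ, hσ⟩ := hr
  set σ' : List (MSOMove M × MSOMove N) → MSOMove M ⊕ MSOMove N :=
    fun h' => if h'.length = h.length then x else σ h' with hσ'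
  have hagree : ∀ i < h.length, σ' (msoPlay S σ i) = σ (msoPlay S σ i) := by
    intro i hi
    simp [hσ', msoPlay_length, Nat.ne_of_lt hi]
  have h1 : msoPlay S σ' h.length = h := (msoPlay_congr S σ σ' h.length hagree).trans hσ
  refine ⟨σ', ?_⟩
  have h2 : (h ++ [S h x]).length = h.length + 1 := by simp
  rw [h2]
  show msoPlay S σ' h.length ++ [S (msoPlay S σ' h.length) (σ' (msoPlay S σ' h.length))] = _
  rw [h1]
  simp [hσ']

lemma mem_ptsOf {h : List (MSOMove M × MSOMove N)} {x : M} {y : N} :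
    (x, y) ∈ ptsOf h ↔ (Sum.inl x, Sum.inl y) ∈ h := by
  simp only [ptsOf, List.mem_filterMap]
  constructor
  · rintro ⟨⟨(a | X), (b | Y)⟩, hp, he⟩ <;> simp_all <;> exact hp
  · intro hp; exact ⟨_, hp, rfl⟩

lemma mem_setsOf {h : List (MSOMove M × MSOMove N)} {X : Set M} {Y : Set N} :
    (X, Y) ∈ setsOf h ↔ (Sum.inr X, Sum.inr Y) ∈ h := by
  simp only [setsOf, List.mem_filterMap]
  constructor
  · rintro ⟨⟨(a | X'), (b | Y')⟩, hp, he⟩ <;> simp_all <;> exact hp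
  · intro hp; exact ⟨_, hp, rfl⟩

lemma winOn_sub (SM : L.Structure M) (SN : L.Structure N)
    {H h : List (MSOMove M × MSOMove N)} (hw : msoWinOn L SM SN H)
    (hsub : ∀ p ∈ h, p ∈ H) : msoWinOn L SM SN h := by
  obtain ⟨h1, h2, h3, h4⟩ := hw
  have hpts : ∀ p ∈ ptsOf h, p ∈ ptsOf H := by
    rintro ⟨x, y⟩ hp
    exact mem_ptsOf.mpr (hsub _ (mem_ptsOf.mp hp))
  have hsets : ∀ s ∈ setsOf h, s ∈ setsOf H := by
    rintro ⟨X, Y⟩ hs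
    exact mem_setsOf.mpr (hsub _ (mem_setsOf.mp hs))
  exact ⟨fun p hp => h1 p (hsub p hp),
    fun p hp q hq => h2 p (hpts p hp) q (hpts q hq),
    fun n R f hf => h3 n R f (fun i => hpts _ (hf i)),
    fun p hp s hs => h4 p (hpts p hp) s (hsets s hs)⟩

lemma reach_winOn {SM : L.Structure M} {SN : L.Structure N} {m : ℕ} {S : MSOStrat M N}
    (hw : msoWinning L SM SN m S) {h} (hr : Reach S h) (hm : h.length ≤ m) :
    msoWinOn L SM SN h := by
  obtain ⟨σ, hσ⟩ := hr
  exact winOn_sub SM SN (hw σ) (fun p hp => msoPlay_mono S σ hm p (by rw [hσ]; exact hp))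

lemma move_shape {SM : L.Structure M} {SN : L.Structure N} {m : ℕ} {S : MSOStrat M N}
    (hw : msoWinning L SM SN m S) {h} (hr : Reach S h) (hm : h.length + 1 ≤ m)
    (x : MSOMove M ⊕ MSOMove N) :
    (∃ a b, S h x = (Sum.inl a, Sum.inl b)) ∨ (∃ X Y, S h x = (Sum.inr X, Sum.inr Y)) := by
  have hr' := reach_extend hr x
  have hwin := reach_winOn hw hr' (by simpa using hm)
  exact hwin.1 _ (by simp)

lemma move_pt_left {SM : L.Structure M} {SN : L.Structure N} {m : ℕ} {S : MSOStrat M N}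
    (hp : msoProper S) (hw : msoWinning L SM SN m S) {h} (hr : Reach S h)
    (hm : h.length + 1 ≤ m) (a : M) :
    ∃ b, S h (Sum.inl (Sum.inl a)) = (Sum.inl a, Sum.inl b) := by
  have h1 := (hp h (Sum.inl (Sum.inl a))).1 (Sum.inl a) rfl
  rcases move_shape hw hr hm (Sum.inl (Sum.inl a)) with ⟨a', b, he⟩ | ⟨X, Y, he⟩
  · refine ⟨b, ?_⟩
    rw [he] at h1 ⊢
    simp at h1; rw [h1]
  · rw [he] at h1; simp at h1

lemma move_pt_right {SM : L.Structure M} {SN : L.Structure N} {m : ℕ} {S : MSOStrat M N}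
    (hp : msoProper S) (hw : msoWinning L SM SN m S) {h} (hr : Reach S h)
    (hm : h.length + 1 ≤ m) (b : N) :
    ∃ a, S h (Sum.inr (Sum.inl b)) = (Sum.inl a, Sum.inl b) := by
  have h1 := (hp h (Sum.inr (Sum.inl b))).2 (Sum.inl b) rfl
  rcases move_shape hw hr hm (Sum.inr (Sum.inl b)) with ⟨a, b', he⟩ | ⟨X, Y, he⟩
  · refine ⟨a, ?_⟩
    rw [he] at h1 ⊢
    simp at h1; rw [h1]
  · rw [he] at h1; simp at h1

lemma move_set_left {SM : L.Structure M} {SN : L.Structure N} {m : ℕ} {S : MSOStrat M N}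
    (hp : msoProper S) (hw : msoWinning L SM SN m S) {h} (hr : Reach S h)
    (hm : h.length + 1 ≤ m) (X : Set M) :
    ∃ Y, S h (Sum.inl (Sum.inr X)) = (Sum.inr X, Sum.inr Y) := by
  have h1 := (hp h (Sum.inl (Sum.inr X))).1 (Sum.inr X) rfl
  rcases move_shape hw hr hm (Sum.inl (Sum.inr X)) with ⟨a, b, he⟩ | ⟨X', Y, he⟩
  · rw [he] at h1; simp at h1
  · refine ⟨Y, ?_⟩
    rw [he] at h1 ⊢
    simp at h1; rw [h1]

lemma move_set_right {SM : L.Structure M} {SN : L.Structure N} {m : ℕ} {S : MSOStrat M N}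
    (hp : msoProper S) (hw : msoWinning L SM SN m S) {h} (hr : Reach S h)
    (hm : h.length + 1 ≤ m) (Y : Set N) :
    ∃ X, S h (Sum.inr (Sum.inr Y)) = (Sum.inr X, Sum.inr Y) := by
  have h1 := (hp h (Sum.inr (Sum.inr Y))).2 (Sum.inr Y) rfl
  rcases move_shape hw hr hm (Sum.inr (Sum.inr Y)) with ⟨a, b, he⟩ | ⟨X, Y', he⟩
  · rw [he] at h1; simp at h1
  · refine ⟨X, ?_⟩
    rw [he] at h1 ⊢
    simp at h1; rw [h1]

end Infra

section Adequacy

variable {L : FirstOrder.Language} {M N : Type}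

lemma fun_snoc_comp {α β : Type _} {n : ℕ} (f : α → β) (v : Fin n → α) (a : α) :
    (fun i => f ((Fin.snoc v a : Fin (n+1) → α) i)) = Fin.snoc (fun i => f (v i)) (f a) :=
  funext fun i => i.lastCases (by simp) (fun j => by simp)

lemma mso_adequacy {SM : L.Structure M} {SN : L.Structure N} {m : ℕ} {S : MSOStrat M N}
    (hp : msoProper S) (hw : msoWinning L SM SN m S)
    {n k : ℕ} (φ : MSOForm L n k) :
    ∀ (h : List (MSOMove M × MSOMove N)), Reach S h → h.length + msoQR φ ≤ m →
      ∀ (v : Fin n → M × N) (s : Fin k → Set M × Set N),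
        (∀ i, (Sum.inl (v i).1, Sum.inl (v i).2) ∈ h) →
        (∀ i, (Sum.inr (s i).1, Sum.inr (s i).2) ∈ h) →
        (MSORealize SM φ (fun i => (v i).1) (fun i => (s i).1) ↔
         MSORealize SN φ (fun i => (v i).2) (fun i => (s i).2)) := by
  induction φ with
  | fal =>
    intro h hr hm v s hv hs
    simp [MSORealize]
  | @eq n k i j =>
    intro h hr hm v s hv hs
    have hwin := reach_winOn hw hr (by simpa [msoQR] using hm)
    have := hwin.2.1 (v i) (mem_ptsOf.mpr (hv i)) (v j) (mem_ptsOf.mpr (hv j))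
    simpa [MSORealize] using this
  | @rel n k r R vm =>
    intro h hr hm v s hv hs
    have hwin := reach_winOn hw hr (by simpa [msoQR] using hm)
    have := hwin.2.2.1 r R (fun i => v (vm i)) (fun i => mem_ptsOf.mpr (hv (vm i)))
    simpa [MSORealize, Function.comp_def] using this
  | @mem n k i X =>
    intro h hr hm v s hv hs
    have hwin := reach_winOn hw hr (by simpa [msoQR] using hm)
    have := hwin.2.2.2 (v i) (mem_ptsOf.mpr (hv i)) (s X) (mem_setsOf.mpr (hs X))
    simpa [MSORealize] using this
  | @imp n k f g ihf ihg =>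
    intro h hr hm v s hv hs
    have hmf : h.length + msoQR f ≤ m :=
      le_trans (Nat.add_le_add_left (le_max_left _ _) _) (by simpa [msoQR] using hm)
    have hmg : h.length + msoQR g ≤ m :=
      le_trans (Nat.add_le_add_left (le_max_right _ _) _) (by simpa [msoQR] using hm)
    have Hf := ihf h hr hmf v s hv hs
    have Hg := ihg h hr hmg v s hv hs
    show (_ → _) ↔ (_ → _)
    constructor
    · intro hi ha; exact Hg.mp (hi (Hf.mpr ha))
    · intro hi ha; exact Hg.mpr (hi (Hf.mp ha))
  | @allP n k f ihf =>
    intro h hr hm v s hv hs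
    have hm' : h.length + msoQR f + 1 ≤ m := by simp [msoQR] at hm; omega
    show (∀ x : M, _) ↔ (∀ y : N, _)
    constructor
    · intro hM y
      obtain ⟨x, hx⟩ := move_pt_right hp hw hr (by omega) y
      set pr := S h (Sum.inr (Sum.inl y)) with hpr
      have hr' : Reach S (h ++ [pr]) := reach_extend hr _
      have hmem : (Sum.inl x, Sum.inl y) ∈ h ++ [pr] :=
        List.mem_append_right _ (by rw [hx]; exact List.mem_singleton_self _)
      have IH := ihf (h ++ [pr]) hr' (by simp; omega) (Fin.snoc v (x, y)) s
        (fun i => i.lastCases (by rw [Fin.snoc_last]; exact hmem)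
          (fun j => by rw [Fin.snoc_castSucc]; exact List.mem_append_left _ (hv j)))
        (fun i => List.mem_append_left _ (hs i))
      rw [fun_snoc_comp Prod.fst v (x, y), fun_snoc_comp Prod.snd v (x, y)] at IH
      exact IH.mp (hM x)
    · intro hN x
      obtain ⟨y, hy⟩ := move_pt_left hp hw hr (by omega) x
      set pr := S h (Sum.inl (Sum.inl x)) with hpr
      have hr' : Reach S (h ++ [pr]) := reach_extend hr _
      have hmem : (Sum.inl x, Sum.inl y) ∈ h ++ [pr] :=
        List.mem_append_right _ (by rw [hy]; exact List.mem_singleton_self _)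
      have IH := ihf (h ++ [pr]) hr' (by simp; omega) (Fin.snoc v (x, y)) s
        (fun i => i.lastCases (by rw [Fin.snoc_last]; exact hmem)
          (fun j => by rw [Fin.snoc_castSucc]; exact List.mem_append_left _ (hv j)))
        (fun i => List.mem_append_left _ (hs i))
      rw [fun_snoc_comp Prod.fst v (x, y), fun_snoc_comp Prod.snd v (x, y)] at IH
      exact IH.mpr (hN y)
  | @allS n k f ihf =>
    intro h hr hm v s hv hs
    have hm' : h.length + msoQR f + 1 ≤ m := by simp [msoQR] at hm; omega
    show (∀ X : Set M, _) ↔ (∀ Y : Set N, _)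
    constructor
    · intro hM Y
      obtain ⟨X, hX⟩ := move_set_right hp hw hr (by omega) Y
      set pr := S h (Sum.inr (Sum.inr Y)) with hpr
      have hr' : Reach S (h ++ [pr]) := reach_extend hr _
      have hmem : (Sum.inr X, Sum.inr Y) ∈ h ++ [pr] :=
        List.mem_append_right _ (by rw [hX]; exact List.mem_singleton_self _)
      have IH := ihf (h ++ [pr]) hr' (by simp; omega) v (Fin.snoc s (X, Y))
        (fun i => List.mem_append_left _ (hv i))
        (fun i => i.lastCases (by rw [Fin.snoc_last]; exact hmem)
          (fun j => by rw [Fin.snoc_castSucc]; exact List.mem_append_left _ (hs j)))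
      rw [fun_snoc_comp Prod.fst s (X, Y), fun_snoc_comp Prod.snd s (X, Y)] at IH
      exact IH.mp (hM X)
    · intro hN X
      obtain ⟨Y, hY⟩ := move_set_left hp hw hr (by omega) X
      set pr := S h (Sum.inl (Sum.inr X)) with hpr
      have hr' : Reach S (h ++ [pr]) := reach_extend hr _
      have hmem : (Sum.inr X, Sum.inr Y) ∈ h ++ [pr] :=
        List.mem_append_right _ (by rw [hY]; exact List.mem_singleton_self _)
      have IH := ihf (h ++ [pr]) hr' (by simp; omega) v (Fin.snoc s (X, Y))
        (fun i => List.mem_append_left _ (hv i))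
        (fun i => i.lastCases (by rw [Fin.snoc_last]; exact hmem)
          (fun j => by rw [Fin.snoc_castSucc]; exact List.mem_append_left _ (hs j)))
      rw [fun_snoc_comp Prod.fst s (X, Y), fun_snoc_comp Prod.snd s (X, Y)] at IH
      exact IH.mpr (hN Y)

end Adequacy

section Comp

variable {A₁ A₂ B₁ B₂ : Type}

/-- Every pair in the history is an `A`-point pair, a `B`-point pair, or a set pair. -/
def Typed (h : List (MSOMove (A₁ ⊕ B₁) × MSOMove (A₂ ⊕ B₂))) : Prop :=
  ∀ p ∈ h,
    (∃ a a', p = (Sum.inl (Sum.inl a), Sum.inl (Sum.inl a'))) ∨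
    (∃ b b', p = (Sum.inl (Sum.inr b), Sum.inl (Sum.inr b'))) ∨
    (∃ Z Z', p = (Sum.inr Z, Sum.inr Z'))

lemma typed_pt {h : List (MSOMove (A₁ ⊕ B₁) × MSOMove (A₂ ⊕ B₂))}
    (hT : Typed h) {x : A₁ ⊕ B₁} {y : A₂ ⊕ B₂} (hm : (Sum.inl x, Sum.inl y) ∈ h) :
    (∃ a a', x = Sum.inl a ∧ y = Sum.inl a') ∨ (∃ b b', x = Sum.inr b ∧ y = Sum.inr b') := by
  rcases hT _ hm with ⟨a, a', he⟩ | ⟨b, b', he⟩ | ⟨Z, Z', he⟩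
  · replace he := Prod.ext_iff.mp he
    exact Or.inl ⟨a, a', Sum.inl.inj he.1, Sum.inl.inj he.2⟩
  · replace he := Prod.ext_iff.mp he
    exact Or.inr ⟨b, b', Sum.inl.inj he.1, Sum.inl.inj he.2⟩
  · replace he := Prod.ext_iff.mp he
    exact absurd he.1 (by simp)

lemma length_projA_le (h : List (MSOMove (A₁ ⊕ B₁) × MSOMove (A₂ ⊕ B₂))) :
    (msoProjA h).length ≤ h.length := List.length_filterMap_le _ _

lemma length_projB_le (h : List (MSOMove (A₁ ⊕ B₁) × MSOMove (A₂ ⊕ B₂))) :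
    (msoProjB h).length ≤ h.length := List.length_filterMap_le _ _

lemma projA_mem_pt {h : List (MSOMove (A₁ ⊕ B₁) × MSOMove (A₂ ⊕ B₂))} {a : A₁} {a' : A₂}
    (hm : (Sum.inl (Sum.inl a), Sum.inl (Sum.inl a')) ∈ h) :
    (a, a') ∈ ptsOf (msoProjA h) :=
  mem_ptsOf.mpr (List.mem_filterMap.mpr ⟨_, hm, rfl⟩)

lemma projB_mem_pt {h : List (MSOMove (A₁ ⊕ B₁) × MSOMove (A₂ ⊕ B₂))} {b : B₁} {b' : B₂}
    (hm : (Sum.inl (Sum.inr b), Sum.inl (Sum.inr b')) ∈ h) :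
    (b, b') ∈ ptsOf (msoProjB h) :=
  mem_ptsOf.mpr (List.mem_filterMap.mpr ⟨_, hm, rfl⟩)

lemma projA_mem_set {h : List (MSOMove (A₁ ⊕ B₁) × MSOMove (A₂ ⊕ B₂))}
    {Z : Set (A₁ ⊕ B₁)} {Z' : Set (A₂ ⊕ B₂)} (hm : (Sum.inr Z, Sum.inr Z') ∈ h) :
    (Sum.inl ⁻¹' Z, Sum.inl ⁻¹' Z') ∈ setsOf (msoProjA h) :=
  mem_setsOf.mpr (List.mem_filterMap.mpr ⟨_, hm, rfl⟩)

lemma projB_mem_set {h : List (MSOMove (A₁ ⊕ B₁) × MSOMove (A₂ ⊕ B₂))}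
    {Z : Set (A₁ ⊕ B₁)} {Z' : Set (A₂ ⊕ B₂)} (hm : (Sum.inr Z, Sum.inr Z') ∈ h) :
    (Sum.inr ⁻¹' Z, Sum.inr ⁻¹' Z') ∈ setsOf (msoProjB h) :=
  mem_setsOf.mpr (List.mem_filterMap.mpr ⟨_, hm, rfl⟩)

lemma preimage_inl_union {A B : Type} (ZA : Set A) (ZB : Set B) :
    Sum.inl ⁻¹' (Sum.inl '' ZA ∪ Sum.inr '' ZB) = ZA := by
  ext a; simp

lemma preimage_inr_union {A B : Type} (ZA : Set A) (ZB : Set B) :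
    Sum.inr ⁻¹' (Sum.inl '' ZA ∪ Sum.inr '' ZB) = ZB := by
  ext b; simp

lemma projA_append_pt {h : List (MSOMove (A₁ ⊕ B₁) × MSOMove (A₂ ⊕ B₂))} (a : A₁) (a' : A₂) :
    msoProjA (h ++ [((Sum.inl (Sum.inl a), Sum.inl (Sum.inl a')) : MSOMove (A₁ ⊕ B₁) × MSOMove (A₂ ⊕ B₂))]) =
      msoProjA h ++ [((Sum.inl a, Sum.inl a') : MSOMove A₁ × MSOMove A₂)] := by
  simp [msoProjA, List.filterMap_append]

lemma projA_append_ptB {h : List (MSOMove (A₁ ⊕ B₁) × MSOMove (A₂ ⊕ B₂))} (b : B₁) (b' : B₂) :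
    msoProjA (h ++ [((Sum.inl (Sum.inr b), Sum.inl (Sum.inr b')) : MSOMove (A₁ ⊕ B₁) × MSOMove (A₂ ⊕ B₂))]) = msoProjA h := by
  simp [msoProjA, List.filterMap_append]

lemma projB_append_pt {h : List (MSOMove (A₁ ⊕ B₁) × MSOMove (A₂ ⊕ B₂))} (b : B₁) (b' : B₂) :
    msoProjB (h ++ [((Sum.inl (Sum.inr b), Sum.inl (Sum.inr b')) : MSOMove (A₁ ⊕ B₁) × MSOMove (A₂ ⊕ B₂))]) =
      msoProjB h ++ [((Sum.inl b, Sum.inl b') : MSOMove B₁ × MSOMove B₂)] := by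
  simp [msoProjB, List.filterMap_append]

lemma projB_append_ptA {h : List (MSOMove (A₁ ⊕ B₁) × MSOMove (A₂ ⊕ B₂))} (a : A₁) (a' : A₂) :
    msoProjB (h ++ [((Sum.inl (Sum.inl a), Sum.inl (Sum.inl a')) : MSOMove (A₁ ⊕ B₁) × MSOMove (A₂ ⊕ B₂))]) = msoProjB h := by
  simp [msoProjB, List.filterMap_append]

lemma projA_append_set {h : List (MSOMove (A₁ ⊕ B₁) × MSOMove (A₂ ⊕ B₂))}
    (Z : Set (A₁ ⊕ B₁)) (Z' : Set (A₂ ⊕ B₂)) :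
    msoProjA (h ++ [((Sum.inr Z, Sum.inr Z') : MSOMove (A₁ ⊕ B₁) × MSOMove (A₂ ⊕ B₂))]) =
      msoProjA h ++ [((Sum.inr (Sum.inl ⁻¹' Z), Sum.inr (Sum.inl ⁻¹' Z')) : MSOMove A₁ × MSOMove A₂)] := by
  simp [msoProjA, List.filterMap_append]

lemma projB_append_set {h : List (MSOMove (A₁ ⊕ B₁) × MSOMove (A₂ ⊕ B₂))}
    (Z : Set (A₁ ⊕ B₁)) (Z' : Set (A₂ ⊕ B₂)) :
    msoProjB (h ++ [((Sum.inr Z, Sum.inr Z') : MSOMove (A₁ ⊕ B₁) × MSOMove (A₂ ⊕ B₂))]) =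
      msoProjB h ++ [((Sum.inr (Sum.inr ⁻¹' Z), Sum.inr (Sum.inr ⁻¹' Z')) : MSOMove B₁ × MSOMove B₂)] := by
  simp [msoProjB, List.filterMap_append]

end Comp

section Invariant

variable {L : FirstOrder.Language} {A₁ A₂ B₁ B₂ : Type}
  {SA₁ : L.Structure A₁} {SA₂ : L.Structure A₂}
  {SB₁ : L.Structure B₁} {SB₂ : L.Structure B₂}
  {m : ℕ} {S₁ : MSOStrat A₁ A₂} {S₂ : MSOStrat B₁ B₂}

lemma msoComp_invariant (hS₁p : msoProper S₁) (hS₂p : msoProper S₂)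
    (hS₁ : msoWinning L SA₁ SA₂ m S₁) (hS₂ : msoWinning L SB₁ SB₂ m S₂)
    (σ : List (MSOMove (A₁ ⊕ B₁) × MSOMove (A₂ ⊕ B₂)) →
      MSOMove (A₁ ⊕ B₁) ⊕ MSOMove (A₂ ⊕ B₂)) :
    ∀ k, k ≤ m →
      Typed (msoPlay (msoComp S₁ S₂) σ k) ∧
      Reach S₁ (msoProjA (msoPlay (msoComp S₁ S₂) σ k)) ∧
      Reach S₂ (msoProjB (msoPlay (msoComp S₁ S₂) σ k)) := by
  intro k
  induction k with
  | zero =>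
    intro _
    refine ⟨?_, reach_nil S₁, reach_nil S₂⟩
    intro p hp
    simp [msoPlay] at hp
  | succ k ih =>
    intro hk
    obtain ⟨hT, hRA, hRB⟩ := ih (Nat.le_of_succ_le hk)
    set H := msoPlay (msoComp S₁ S₂) σ k with hH
    have hlen : H.length = k := msoPlay_length _ _ _
    have hlenA : (msoProjA H).length + 1 ≤ m := by
      have := length_projA_le H; omega
    have hlenB : (msoProjB H).length + 1 ≤ m := by
      have := length_projB_le H; omega
    have hplay : msoPlay (msoComp S₁ S₂) σ (k+1) = H ++ [msoComp S₁ S₂ H (σ H)] := rfl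
    have hTyped1 : ∀ q, msoComp S₁ S₂ H (σ H) = q →
        ((∃ a a', q = (Sum.inl (Sum.inl a), Sum.inl (Sum.inl a'))) ∨
         (∃ b b', q = (Sum.inl (Sum.inr b), Sum.inl (Sum.inr b'))) ∨
         (∃ Z Z', q = (Sum.inr Z, Sum.inr Z'))) →
        Typed (H ++ [q]) := by
      intro q _ hq p hp
      rcases List.mem_append.mp hp with hp | hp
      · exact hT p hp
      · rw [List.mem_singleton.mp hp]; exact hq
    rcases hx : σ H with (a | Z) | (a' | Z')
    · rcases a with a | b
      · -- spoiler plays point a : A₁ on the left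
        obtain ⟨a', hra⟩ := move_pt_left hS₁p hS₁ hRA hlenA a
        have hpair : msoComp S₁ S₂ H (σ H) =
            (Sum.inl (Sum.inl a), Sum.inl (Sum.inl a')) := by
          rw [hx]; simp only [msoComp, hra, mapMove]; rfl
        rw [hplay, hpair]
        refine ⟨hTyped1 _ hpair (Or.inl ⟨a, a', rfl⟩), ?_, ?_⟩
        · erw [projA_append_pt, ← hra]
          exact reach_extend hRA _
        · erw [projB_append_ptA]; exact hRB
      · -- spoiler plays point b : B₁ on the left
        obtain ⟨b', hrb⟩ := move_pt_left hS₂p hS₂ hRB hlenB b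
        have hpair : msoComp S₁ S₂ H (σ H) =
            (Sum.inl (Sum.inr b), Sum.inl (Sum.inr b')) := by
          rw [hx]; simp only [msoComp, hrb, mapMove]; rfl
        rw [hplay, hpair]
        refine ⟨hTyped1 _ hpair (Or.inr (Or.inl ⟨b, b', rfl⟩)), ?_, ?_⟩
        · erw [projA_append_ptB]; exact hRA
        · erw [projB_append_pt, ← hrb]
          exact reach_extend hRB _
    · -- spoiler plays set Z on the left
      obtain ⟨ZA', hrA⟩ := move_set_left hS₁p hS₁ hRA hlenA (Sum.inl ⁻¹' Z)
      obtain ⟨ZB', hrB⟩ := move_set_left hS₂p hS₂ hRB hlenB (Sum.inr ⁻¹' Z)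
      have hpair : msoComp S₁ S₂ H (σ H) =
          (Sum.inr Z, Sum.inr (Sum.inl '' ZA' ∪ Sum.inr '' ZB')) := by
        rw [hx]; simp only [msoComp, hrA, hrB, moveSet]; rfl
      rw [hplay, hpair]
      refine ⟨hTyped1 _ hpair (Or.inr (Or.inr ⟨_, _, rfl⟩)), ?_, ?_⟩
      · erw [projA_append_set, preimage_inl_union, ← hrA]
        exact reach_extend hRA _
      · erw [projB_append_set, preimage_inr_union, ← hrB]
        exact reach_extend hRB _
    · rcases a' with a' | b'
      · -- spoiler plays point a' : A₂ on the right
        obtain ⟨a, hra⟩ := move_pt_right hS₁p hS₁ hRA hlenA a'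
        have hpair : msoComp S₁ S₂ H (σ H) =
            (Sum.inl (Sum.inl a), Sum.inl (Sum.inl a')) := by
          rw [hx]; simp only [msoComp, hra, mapMove]; rfl
        rw [hplay, hpair]
        refine ⟨hTyped1 _ hpair (Or.inl ⟨a, a', rfl⟩), ?_, ?_⟩
        · erw [projA_append_pt, ← hra]
          exact reach_extend hRA _
        · erw [projB_append_ptA]; exact hRB
      · -- spoiler plays point b' : B₂ on the right
        obtain ⟨b, hrb⟩ := move_pt_right hS₂p hS₂ hRB hlenB b'
        have hpair : msoComp S₁ S₂ H (σ H) =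
            (Sum.inl (Sum.inr b), Sum.inl (Sum.inr b')) := by
          rw [hx]; simp only [msoComp, hrb, mapMove]; rfl
        rw [hplay, hpair]
        refine ⟨hTyped1 _ hpair (Or.inr (Or.inl ⟨b, b', rfl⟩)), ?_, ?_⟩
        · erw [projA_append_ptB]; exact hRA
        · erw [projB_append_pt, ← hrb]
          exact reach_extend hRB _
    · -- spoiler plays set Z' on the right
      obtain ⟨ZA, hrA⟩ := move_set_right hS₁p hS₁ hRA hlenA (Sum.inl ⁻¹' Z')
      obtain ⟨ZB, hrB⟩ := move_set_right hS₂p hS₂ hRB hlenB (Sum.inr ⁻¹' Z')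
      have hpair : msoComp S₁ S₂ H (σ H) =
          (Sum.inr (Sum.inl '' ZA ∪ Sum.inr '' ZB), Sum.inr Z') := by
        rw [hx]; simp only [msoComp, hrA, hrB, moveSet]; rfl
      rw [hplay, hpair]
      refine ⟨hTyped1 _ hpair (Or.inr (Or.inr ⟨_, _, rfl⟩)), ?_, ?_⟩
      · erw [projA_append_set, preimage_inl_union, ← hrA]
        exact reach_extend hRA _
      · erw [projB_append_set, preimage_inr_union, ← hrB]
        exact reach_extend hRB _

end Invariant

lemma sumStructure_relMap {L : FirstOrder.Language} (hfun : ∀ n, IsEmpty (L.Functions n))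
    {M N : Type} (SM : L.Structure M) (SN : L.Structure N) {n : ℕ}
    (R : L.Relations n) (x : Fin n → M ⊕ N) :
    (sumStructure L hfun SM SN).RelMap R x ↔
      (∃ f : Fin n → M, x = Sum.inl ∘ f ∧ SM.RelMap R f) ∨
      (∃ g : Fin n → N, x = Sum.inr ∘ g ∧ SN.RelMap R g) := Iff.rfl

section Winning

variable {L : FirstOrder.Language} {A₁ A₂ B₁ B₂ : Type}
  {SA₁ : L.Structure A₁} {SA₂ : L.Structure A₂}
  {SB₁ : L.Structure B₁} {SB₂ : L.Structure B₂}
  {m : ℕ} {S₁ : MSOStrat A₁ A₂} {S₂ : MSOStrat B₁ B₂}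

lemma msoComp_winning (hfun : ∀ n, IsEmpty (L.Functions n))
    (hS₁p : msoProper S₁) (hS₂p : msoProper S₂)
    (hS₁ : msoWinning L SA₁ SA₂ m S₁) (hS₂ : msoWinning L SB₁ SB₂ m S₂) :
    msoWinning L (sumStructure L hfun SA₁ SB₁) (sumStructure L hfun SA₂ SB₂)
      m (msoComp S₁ S₂) := by
  intro σ
  obtain ⟨hT, hRA, hRB⟩ := msoComp_invariant hS₁p hS₂p hS₁ hS₂ σ m le_rfl
  set H := msoPlay (msoComp S₁ S₂) σ m with hH
  have hlen : H.length = m := msoPlay_length _ _ _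
  have hWA : msoWinOn L SA₁ SA₂ (msoProjA H) :=
    reach_winOn hS₁ hRA (le_trans (length_projA_le H) (le_of_eq hlen))
  have hWB : msoWinOn L SB₁ SB₂ (msoProjB H) :=
    reach_winOn hS₂ hRB (le_trans (length_projB_le H) (le_of_eq hlen))
  refine ⟨?_, ?_, ?_, ?_⟩
  · -- condition 1
    intro p hp
    rcases hT p hp with ⟨a, a', he⟩ | ⟨b, b', he⟩ | ⟨Z, Z', he⟩
    · exact Or.inl ⟨_, _, he⟩
    · exact Or.inl ⟨_, _, he⟩
    · exact Or.inr ⟨_, _, he⟩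
  · -- condition 2: partial isomorphism on points
    rintro ⟨x, y⟩ hp ⟨x2, y2⟩ hq
    rcases typed_pt hT (mem_ptsOf.mp hp) with ⟨a, a', hx, hy⟩ | ⟨b, b', hx, hy⟩ <;>
      rcases typed_pt hT (mem_ptsOf.mp hq) with ⟨a2, a2', hx2, hy2⟩ | ⟨b2, b2', hx2, hy2⟩
    · have h1 := hWA.2.1 (a, a')
        (projA_mem_pt (by rw [← hx, ← hy]; exact mem_ptsOf.mp hp)) (a2, a2')
        (projA_mem_pt (by rw [← hx2, ← hy2]; exact mem_ptsOf.mp hq))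
      subst hx; subst hy; subst hx2; subst hy2
      simpa using h1
    · subst hx; subst hy; subst hx2; subst hy2; simp
    · subst hx; subst hy; subst hx2; subst hy2; simp
    · have h1 := hWB.2.1 (b, b')
        (projB_mem_pt (by rw [← hx, ← hy]; exact mem_ptsOf.mp hp)) (b2, b2')
        (projB_mem_pt (by rw [← hx2, ← hy2]; exact mem_ptsOf.mp hq))
      subst hx; subst hy; subst hx2; subst hy2
      simpa using h1
  · -- condition 3: relations
    intro n R f hf
    have hfm : ∀ i, (Sum.inl (f i).1, Sum.inl (f i).2) ∈ H := fun i => mem_ptsOf.mp (hf i)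
    cases n with
    | zero =>
      rw [sumStructure_relMap, sumStructure_relMap]
      have key : ∀ {C D : Type} (SC : L.Structure C) (SD : L.Structure D)
          (x : Fin 0 → C ⊕ D),
          ((∃ f : Fin 0 → C, x = Sum.inl ∘ f ∧ SC.RelMap R f) ∨
           (∃ g : Fin 0 → D, x = Sum.inr ∘ g ∧ SD.RelMap R g)) ↔
          (SC.RelMap R Fin.elim0 ∨ SD.RelMap R Fin.elim0) := by
        intro C D SC SD x
        constructor
        · rintro (⟨g, hg, hR⟩ | ⟨g, hg, hR⟩)
          · exact Or.inl (by rwa [Subsingleton.elim (Fin.elim0 : Fin 0 → C) g])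
          · exact Or.inr (by rwa [Subsingleton.elim (Fin.elim0 : Fin 0 → D) g])
        · rintro (hR | hR)
          · exact Or.inl ⟨Fin.elim0, funext fun i => i.elim0, hR⟩
          · exact Or.inr ⟨Fin.elim0, funext fun i => i.elim0, hR⟩
      rw [key, key]
      have hA0 : SA₁.RelMap R Fin.elim0 ↔ SA₂.RelMap R Fin.elim0 := by
        have := hWA.2.2.1 0 R Fin.elim0 (fun i => i.elim0)
        convert this using 2 <;> exact Subsingleton.elim _ _
      have hB0 : SB₁.RelMap R Fin.elim0 ↔ SB₂.RelMap R Fin.elim0 := by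
        have := hWB.2.2.1 0 R Fin.elim0 (fun i => i.elim0)
        convert this using 2 <;> exact Subsingleton.elim _ _
      exact or_congr hA0 hB0
    | succ n =>
      have hclass : ∀ i, (∃ a a', (f i).1 = Sum.inl a ∧ (f i).2 = Sum.inl a') ∨
          (∃ b b', (f i).1 = Sum.inr b ∧ (f i).2 = Sum.inr b') :=
        fun i => typed_pt hT (hfm i)
      rw [sumStructure_relMap, sumStructure_relMap]
      by_cases hA : ∀ i, ∃ a a', (f i).1 = Sum.inl a ∧ (f i).2 = Sum.inl a'
      · choose a a' ha ha' using hA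
        have hpts : ∀ i, (a i, a' i) ∈ ptsOf (msoProjA H) := by
          intro i
          exact projA_mem_pt (by rw [← ha i, ← ha' i]; exact hfm i)
        have hrel := hWA.2.2.1 (n+1) R (fun i => (a i, a' i)) hpts
        constructor
        · rintro (⟨g, hg, hR⟩ | ⟨g, hg, hR⟩)
          · have hag : a = g := funext fun i =>
              Sum.inl.inj (by rw [← ha i]; exact congrFun hg i)
            refine Or.inl ⟨a', funext fun i => ha' i, ?_⟩
            exact hrel.mp (by rw [hag]; exact hR)
          · exfalso; simpa [ha 0] using congrFun hg 0
        · rintro (⟨g, hg, hR⟩ | ⟨g, hg, hR⟩)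
          · have hag : a' = g := funext fun i =>
              Sum.inl.inj (by rw [← ha' i]; exact congrFun hg i)
            refine Or.inl ⟨a, funext fun i => ha i, ?_⟩
            exact hrel.mpr (by rw [hag]; exact hR)
          · exfalso; simpa [ha' 0] using congrFun hg 0
      · by_cases hB : ∀ i, ∃ b b', (f i).1 = Sum.inr b ∧ (f i).2 = Sum.inr b'
        · choose b b' hb hb' using hB
          have hpts : ∀ i, (b i, b' i) ∈ ptsOf (msoProjB H) := by
            intro i
            exact projB_mem_pt (by rw [← hb i, ← hb' i]; exact hfm i)
          have hrel := hWB.2.2.1 (n+1) R (fun i => (b i, b' i)) hpts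
          constructor
          · rintro (⟨g, hg, hR⟩ | ⟨g, hg, hR⟩)
            · exfalso; simpa [hb 0] using congrFun hg 0
            · have hbg : b = g := funext fun i =>
                Sum.inr.inj (by rw [← hb i]; exact congrFun hg i)
              refine Or.inr ⟨b', funext fun i => hb' i, ?_⟩
              exact hrel.mp (by rw [hbg]; exact hR)
          · rintro (⟨g, hg, hR⟩ | ⟨g, hg, hR⟩)
            · exfalso; simpa [hb' 0] using congrFun hg 0
            · have hbg : b' = g := funext fun i =>
                Sum.inr.inj (by rw [← hb' i]; exact congrFun hg i)
              refine Or.inr ⟨b, funext fun i => hb i, ?_⟩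
              exact hrel.mpr (by rw [hbg]; exact hR)
        · -- mixed tuple: both sides fail
          obtain ⟨i, hi⟩ := not_forall.mp hA
          obtain ⟨j, hj⟩ := not_forall.mp hB
          obtain ⟨bi, bi', hib1, hib2⟩ := (hclass i).resolve_left hi
          obtain ⟨aj, aj', hj1, hj2⟩ := (hclass j).resolve_right hj
          constructor
          · rintro (⟨g, hg, hR⟩ | ⟨g, hg, hR⟩) <;> exfalso
            · simpa [hib1] using congrFun hg i
            · simpa [hj1] using congrFun hg j
          · rintro (⟨g, hg, hR⟩ | ⟨g, hg, hR⟩) <;> exfalso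
            · simpa [hib2] using congrFun hg i
            · simpa [hj2] using congrFun hg j
  · -- condition 4: sets
    rintro ⟨x, y⟩ hp ⟨Z, Z'⟩ hs
    have hZm := mem_setsOf.mp hs
    rcases typed_pt hT (mem_ptsOf.mp hp) with ⟨a, a', hx, hy⟩ | ⟨b, b', hx, hy⟩
    · have h1 := hWA.2.2.2 (a, a')
        (projA_mem_pt (by rw [← hx, ← hy]; exact mem_ptsOf.mp hp))
        (Sum.inl ⁻¹' Z, Sum.inl ⁻¹' Z') (projA_mem_set hZm)
      subst hx; subst hy
      simpa [Set.mem_preimage] using h1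
    · have h1 := hWB.2.2.2 (b, b')
        (projB_mem_pt (by rw [← hx, ← hy]; exact mem_ptsOf.mp hp))
        (Sum.inr ⁻¹' Z, Sum.inr ⁻¹' Z') (projB_mem_set hZm)
      subst hx; subst hy
      simpa [Set.mem_preimage] using h1

lemma msoComp_proper (S₁ : MSOStrat A₁ A₂) (S₂ : MSOStrat B₁ B₂) :
    msoProper (msoComp S₁ S₂) := by
  intro h x
  constructor
  · intro a ha
    subst ha
    rcases a with (a | b) | Z <;> rfl
  · intro b hb
    subst hb
    rcases b with (a | b) | Z <;> rfl

end Winning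
/-- Composition of winning MSO-EF strategies on disjoint unions: if the
duplicator has winning strategies in the `m`-round MSO-EF games between
`A₁, A₂` and between `B₁, B₂`, then the composed (componentwise) strategy is
winning in the `m`-round MSO-EF game between `A₁ ⊔ B₁` and `A₂ ⊔ B₂`; in
particular the disjoint unions satisfy the same MSO sentences of quantifier
rank at most `m`. -/
theorem msoComp_winning_and_same_MSO_sentences (L : FirstOrder.Language)
    (hfun : ∀ n, IsEmpty (L.Functions n))
    (harity : ∀ n, 2 < n → IsEmpty (L.Relations n))
    (hfin : ∀ n, Finite (L.Relations n)) (m : ℕ)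
    (A₁ A₂ B₁ B₂ : Type) [Fintype A₁] [Fintype A₂] [Fintype B₁] [Fintype B₂]
    (SA₁ : L.Structure A₁) (SA₂ : L.Structure A₂)
    (SB₁ : L.Structure B₁) (SB₂ : L.Structure B₂)
    (S₁ : MSOStrat A₁ A₂) (S₂ : MSOStrat B₁ B₂)
    (hS₁p : msoProper S₁) (hS₂p : msoProper S₂)
    (hS₁ : msoWinning L SA₁ SA₂ m S₁) (hS₂ : msoWinning L SB₁ SB₂ m S₂) :
    msoWinning L (sumStructure L hfun SA₁ SB₁) (sumStructure L hfun SA₂ SB₂)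
      m (msoComp S₁ S₂) ∧
    (∀ φ : MSOForm L 0 0, msoQR φ ≤ m →
      (MSORealize (sumStructure L hfun SA₁ SB₁) φ
          (fun i => i.elim0) (fun i => i.elim0) ↔
        MSORealize (sumStructure L hfun SA₂ SB₂) φ
          (fun i => i.elim0) (fun i => i.elim0))) := by

  have hwin := msoComp_winning hfun hS₁p hS₂p hS₁ hS₂
  refine ⟨hwin, ?_⟩
  intro φ hφ
  have := mso_adequacy (msoComp_proper S₁ S₂) hwin φ [] (reach_nil _)
    (by simpa using hφ) (fun i => i.elim0) (fun i => i.elim0)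
    (fun i => i.elim0) (fun i => i.elim0)
  convert this using 2 <;> exact Subsingleton.elim _ _
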